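/- Let H be a Hilbert space, X ⊂ H a Banach space continuously and densely embedded with ‖x‖ ≤ ‖x‖_X, and H = H⁰ ⊕ H^± the orthogonal decomposition with H⁰ = Ker B(θ) finite-dimensional, H⁰ ⊂ X, and X^± = X ∩ H^±. Suppose B(θ) ∈ L_s(H) satisfies B(θ)(X) ⊆ X, B(θ)|_{X^±} : X^± → X^± is a Banach isomorphism, and A : V ∩ X → X is a map with A(θ) = θ which is strictly Fréchet differentiable at θ with A'(θ) = B(θ)|_X, i.e. ‖A(x₁) − B(θ)x₁ − A(x₂) + B(θ)x₂‖_X ≤ K_r‖x₁ − x₂‖_X for x₁,x₂ ∈ B_X(θ,r), where K_r → 0 as r → 0. Then there exist r₀ > 0 and a unique map h : B_{H⁰}(θ, r₀) → X^± with h(θ) = θ and (I − P⁰)A(z + h(z)) = θ for all z ∈ B_{H⁰}(θ, r₀); moreover h is Lipschitz continuous with ‖h(z₁) − h(z₂)‖_X ≤ 2‖z₁ − z₂‖_X. -/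

import Mathlib

set_option maxHeartbeats 1000000
set_option synthInstance.maxHeartbeats 400000


/-- Implicit-function lemma (Lemma 3.1, first part). Here `X` is a Banach space densely
and continuously embedded in the Hilbert space `H` via `i`, `H⁰ = Ker B(θ)` is
finite-dimensional with a lift `j : H⁰ → X`, `X^± = {x ∈ X | i x ∈ H⁰ᗮ}`,
`B(θ)|_{X^±}` is a Banach isomorphism `e`, and `A : X → X` with `A(θ) = θ` is strictly
Fréchet differentiable at `θ` with derivative `B(θ)|_X`, with modulus `K r → 0`.
Then there are `r₀ > 0` and a unique map `h : B_{H⁰}(θ,r₀) → X^±` with `h(θ) = θ` and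
`(I − P⁰)A(z + h(z)) = θ` (i.e. `A(z + h(z)) ∈ H⁰`), and `h` is Lipschitz with
constant `2`. -/
theorem statement10 {H X : Type*} [NormedAddCommGroup H] [InnerProductSpace ℝ H]
    [CompleteSpace H] [NormedAddCommGroup X] [NormedSpace ℝ X] [CompleteSpace X]
    (i : X →L[ℝ] H) (hinj : Function.Injective i) (hdense : DenseRange i)
    (hile : ∀ x : X, ‖i x‖ ≤ ‖x‖)
    (H0 : Submodule ℝ H) (hfin : FiniteDimensional ℝ H0)
    (j : H0 →ₗ[ℝ] X) (hj : ∀ z : H0, i (j z) = (z : H))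
    (B0 : H →L[ℝ] H) (hB0sa : IsSelfAdjoint B0)
    (hker : LinearMap.ker (B0 : H →ₗ[ℝ] H) = H0)
    (B0X : X →L[ℝ] X) (hB0X : ∀ x : X, i (B0X x) = B0 (i x))
    (e : (Submodule.comap (i.toLinearMap) H0ᗮ) ≃L[ℝ]
         (Submodule.comap (i.toLinearMap) H0ᗮ))
    (he : ∀ u : Submodule.comap (i.toLinearMap) H0ᗮ, (e u : X) = B0X (u : X))
    (A : X → X) (hA0 : A 0 = 0)
    (K : ℝ → ℝ)
    (hK : Filter.Tendsto K (nhdsWithin 0 (Set.Ioi (0 : ℝ))) (nhds 0))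
    (hstrict : ∀ r > (0 : ℝ), ∀ x₁ x₂ : X, ‖x₁‖ < r → ‖x₂‖ < r →
      ‖A x₁ - B0X x₁ - A x₂ + B0X x₂‖ ≤ K r * ‖x₁ - x₂‖) :
    ∃ r₀ > (0 : ℝ), ∃ h : H0 → X,
      h 0 = 0 ∧
      (∀ z : H0, ‖(z : H)‖ < r₀ → i (h z) ∈ H0ᗮ) ∧
      (∀ z : H0, ‖(z : H)‖ < r₀ → ‖h z‖ ≤ r₀) ∧
      (∀ z : H0, ‖(z : H)‖ < r₀ → i (A (j z + h z)) ∈ H0) ∧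
      (∀ z₁ z₂ : H0, ‖(z₁ : H)‖ < r₀ → ‖(z₂ : H)‖ < r₀ →
        ‖h z₁ - h z₂‖ ≤ 2 * ‖(z₁ : H) - (z₂ : H)‖) ∧
      ∀ h' : H0 → X, h' 0 = 0 →
        (∀ z : H0, ‖(z : H)‖ < r₀ → i (h' z) ∈ H0ᗮ) →
        (∀ z : H0, ‖(z : H)‖ < r₀ → ‖h' z‖ ≤ r₀) →
        (∀ z : H0, ‖(z : H)‖ < r₀ → i (A (j z + h' z)) ∈ H0) →
        ∀ z : H0, ‖(z : H)‖ < r₀ → h' z = h z := by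
  classical
  haveI := hfin
  haveI : CompleteSpace H0 := FiniteDimensional.complete ℝ H0
  let Xpm : Submodule ℝ X := Submodule.comap (i.toLinearMap) H0ᗮ
  have hXpmClosed : IsClosed (Xpm : Set X) := by
    have : (Xpm : Set X) = i ⁻¹' (H0ᗮ : Set H) := rfl
    rw [this]
    exact (Submodule.isClosed_orthogonal H0).preimage i.continuous
  haveI : CompleteSpace Xpm := hXpmClosed.completeSpace_coe
  let jc : H0 →L[ℝ] X := LinearMap.toContinuousLinearMap j
  have hjc : ∀ z : H0, jc z = j z := fun z => rfl
  let P : H →L[ℝ] H0 := Submodule.orthogonalProjectionOnto H0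
  let Q : X →L[ℝ] X := ContinuousLinearMap.id ℝ X - jc.comp (P.comp i)
  have hQdef : ∀ x : X, Q x = x - jc (P (i x)) := fun x => rfl
  have hiQ : ∀ x : X, i (Q x) = i x - (P (i x) : H) := by
    intro x
    rw [hQdef, map_sub, hjc, hj]
  have hQmem : ∀ x : X, Q x ∈ Xpm := by
    intro x
    have : i (Q x) ∈ H0ᗮ := by
      rw [hiQ]
      have := Submodule.sub_starProjection_mem_orthogonal (K := H0) (i x)
      rwa [Submodule.starProjection_apply] at this
    exact this
  have hQzero : ∀ y : X, Q y = 0 ↔ i y ∈ H0 := by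
    intro y
    constructor
    · intro h
      have : y = jc (P (i y)) := by
        have h2 := hQdef y; rw [h] at h2; exact (sub_eq_zero.mp h2.symm)
      rw [this, hjc, hj]
      exact (P (i y)).2
    · intro h
      have h1 : (P (i y) : H) = i y := by
        have := (Submodule.starProjection_eq_self_iff (K := H0)).2 h
        rwa [Submodule.starProjection_apply] at this
      have h2 : i (jc (P (i y))) = i y := by rw [hjc, hj, h1]
      have := hinj h2
      rw [hQdef, this, sub_self]
  have hBmem : ∀ v : Xpm, i (B0X (v : X)) ∈ H0ᗮ := by
    intro v
    rw [hB0X]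
    rw [Submodule.mem_orthogonal]
    intro u hu
    have hBu : B0 u = 0 := by
      have huk : u ∈ LinearMap.ker (B0 : H →ₗ[ℝ] H) := by rw [hker]; exact hu
      simpa using huk
    have hsym : (inner ℝ (B0 u) (i (v : X)) : ℝ) = inner ℝ u (B0 (i (v : X))) :=
      hB0sa.isSymmetric u (i (v : X))
    show (inner ℝ u (B0 (i (v : X))) : ℝ) = 0
    rw [← hsym, hBu, inner_zero_left]
  have hBj : ∀ z : H0, B0X (j z) = 0 := by
    intro z
    apply hinj
    rw [hB0X, hj, map_zero]
    have : (z : H) ∈ LinearMap.ker (B0 : H →ₗ[ℝ] H) := by rw [hker]; exact z.2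
    simpa using this
  -- restricted projection and inverse
  let Qr : X →L[ℝ] Xpm := Q.codRestrict Xpm hQmem
  have hQr : ∀ y : X, (Qr y : X) = Q y := fun y => rfl
  let eσ : Xpm →L[ℝ] Xpm := (e.symm : Xpm →L[ℝ] Xpm)
  have heσ : ∀ v : Xpm, eσ v = e.symm v := fun v => rfl
  have hQrB : ∀ d : Xpm, Qr (B0X (d : X)) = e d := by
    intro d
    apply Subtype.ext
    show Q (B0X (d : X)) = (e d : X)
    rw [he]
    have h0 : P (i (B0X (d : X))) = 0 :=
      Submodule.orthogonalProjectionOnto_apply_of_mem_orthogonal (hBmem d)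
    rw [hQdef, h0, map_zero, sub_zero]
  have heB : ∀ d : Xpm, eσ (Qr (B0X (d : X))) = d := by
    intro d; rw [hQrB, heσ, e.symm_apply_apply]
  -- error estimate
  set C : ℝ := ‖eσ‖ * ‖Qr‖ with hCdef
  have hC0 : 0 ≤ C := by positivity
  have herr : ∀ r' > (0:ℝ), ∀ u₁ u₂ : X, ‖u₁‖ < r' → ‖u₂‖ < r' →
      ‖eσ (Qr (A u₁)) - eσ (Qr (A u₂)) - eσ (Qr (B0X (u₁ - u₂)))‖
        ≤ C * (|K r'| * ‖u₁ - u₂‖) := by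
    intro r' hr' u₁ u₂ h1 h2
    have h3 : eσ (Qr (A u₁)) - eσ (Qr (A u₂)) - eσ (Qr (B0X (u₁ - u₂)))
        = eσ (Qr (A u₁ - B0X u₁ - A u₂ + B0X u₂)) := by
      simp only [map_sub, map_add]
      abel
    rw [h3]
    have h4 : ‖A u₁ - B0X u₁ - A u₂ + B0X u₂‖ ≤ |K r'| * ‖u₁ - u₂‖ := by
      refine (hstrict r' hr' u₁ u₂ h1 h2).trans ?_
      exact mul_le_mul_of_nonneg_right (le_abs_self _) (norm_nonneg _)
    calc ‖eσ (Qr (A u₁ - B0X u₁ - A u₂ + B0X u₂))‖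
        ≤ ‖eσ‖ * ‖Qr (A u₁ - B0X u₁ - A u₂ + B0X u₂)‖ := eσ.le_opNorm _
      _ ≤ ‖eσ‖ * (‖Qr‖ * ‖A u₁ - B0X u₁ - A u₂ + B0X u₂‖) := by
          exact mul_le_mul_of_nonneg_left (Qr.le_opNorm _) (by exact norm_nonneg eσ)
      _ ≤ ‖eσ‖ * (‖Qr‖ * (|K r'| * ‖u₁ - u₂‖)) := by
          refine mul_le_mul_of_nonneg_left ?_ (by exact norm_nonneg eσ)
          exact mul_le_mul_of_nonneg_left h4 (by exact norm_nonneg Qr)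
      _ = C * (|K r'| * ‖u₁ - u₂‖) := by rw [hCdef]; ring
  -- pick r with K r small
  set Cj : ℝ := ‖jc‖ with hCjdef
  have hCj0 : 0 ≤ Cj := by rw [hCjdef]; exact norm_nonneg jc
  set ε : ℝ := 1 / (2 * (C + 1) * (Cj + 1)) with hεdef
  have hεpos : 0 < ε := by positivity
  obtain ⟨δ, hδpos, hδ⟩ := Metric.tendsto_nhdsWithin_nhds.mp hK ε hεpos
  set r : ℝ := δ / 2 with hrdef
  have hrpos : 0 < r := by positivity
  have hKr : |K r| < ε := by
    have h1 : r ∈ Set.Ioi (0:ℝ) := hrpos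
    have h2 : dist r 0 < δ := by
      rw [Real.dist_eq, sub_zero, abs_of_pos hrpos, hrdef]
      linarith
    have := hδ h1 h2
    rwa [Real.dist_eq, sub_zero] at this
  have hCK1 : C * |K r| ≤ 1 / 2 := by
    have h1 : C * |K r| ≤ C * ε := mul_le_mul_of_nonneg_left hKr.le hC0
    refine h1.trans ?_
    rw [hεdef, mul_one_div, div_le_iff₀ (by positivity)]
    nlinarith [abs_nonneg (K r)]
  have hCK2 : C * |K r| * Cj ≤ 1 / 2 := by
    have h1 : C * |K r| * Cj ≤ C * ε * Cj := by
      exact mul_le_mul_of_nonneg_right (mul_le_mul_of_nonneg_left hKr.le hC0) hCj0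
    refine h1.trans ?_
    rw [hεdef, mul_one_div, div_mul_eq_mul_div, div_le_iff₀ (by positivity)]
    nlinarith
  -- the radius
  set r₀ : ℝ := r / (Cj + 2) with hr₀def
  have hr₀pos : 0 < r₀ := by positivity
  have hrr₀ : r = (Cj + 2) * r₀ := by
    rw [hr₀def]; field_simp
  have hznorm : ∀ z : H0, ‖z‖ = ‖(z : H)‖ := fun z => rfl
  have hxnorm : ∀ x : Xpm, ‖x‖ = ‖(x : X)‖ := fun x => rfl
  have hball : ∀ (z : H0) (x : Xpm), ‖(z : H)‖ < r₀ → ‖x‖ ≤ r₀ → ‖j z + (x : X)‖ < r := by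
    intro z x hz hx
    have h1 : ‖j z‖ ≤ Cj * ‖(z : H)‖ := by
      rw [← hjc, ← hznorm]; exact jc.le_opNorm z
    have h2 : ‖j z + (x : X)‖ ≤ ‖j z‖ + ‖(x : X)‖ := norm_add_le _ _
    rw [← hxnorm] at h2
    have h3 : Cj * ‖(z : H)‖ ≤ Cj * r₀ := mul_le_mul_of_nonneg_left hz.le hCj0
    nlinarith
  -- the contraction map
  set S : H0 → Xpm → Xpm := fun z x => x - eσ (Qr (A (j z + (x : X)))) with hSdef
  have hS : ∀ z x, S z x = x - eσ (Qr (A (j z + (x : X)))) := fun z x => rfl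
  -- contraction in x
  have hcontr : ∀ (z : H0), ‖(z : H)‖ < r₀ → ∀ x₁ x₂ : Xpm, ‖x₁‖ ≤ r₀ → ‖x₂‖ ≤ r₀ →
      ‖S z x₁ - S z x₂‖ ≤ (1 / 2) * ‖x₁ - x₂‖ := by
    intro z hz x₁ x₂ h1 h2
    have hu1 := hball z x₁ hz h1
    have hu2 := hball z x₂ hz h2
    have hdiff : (j z + (x₁ : X)) - (j z + (x₂ : X)) = ((x₁ - x₂ : Xpm) : X) := by
      push_cast; abel
    have hBe : eσ (Qr (B0X ((j z + (x₁ : X)) - (j z + (x₂ : X))))) = x₁ - x₂ := by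
      rw [hdiff, heB]
    have hSeq : S z x₁ - S z x₂ =
        -(eσ (Qr (A (j z + (x₁ : X)))) - eσ (Qr (A (j z + (x₂ : X))))
          - eσ (Qr (B0X ((j z + (x₁ : X)) - (j z + (x₂ : X)))))) := by
      rw [hBe, hS, hS]; abel
    rw [hSeq, norm_neg]
    have hnn : ‖(j z + (x₁ : X)) - (j z + (x₂ : X))‖ = ‖x₁ - x₂‖ := by
      rw [hdiff, ← hxnorm]
    calc ‖eσ (Qr (A (j z + (x₁ : X)))) - eσ (Qr (A (j z + (x₂ : X))))
          - eσ (Qr (B0X ((j z + (x₁ : X)) - (j z + (x₂ : X)))))‖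
        ≤ C * (|K r| * ‖(j z + (x₁ : X)) - (j z + (x₂ : X))‖) := herr r hrpos _ _ hu1 hu2
      _ = (C * |K r|) * ‖x₁ - x₂‖ := by rw [hnn]; ring
      _ ≤ (1 / 2) * ‖x₁ - x₂‖ := mul_le_mul_of_nonneg_right hCK1 (norm_nonneg _)
  -- dependence on z
  have hzdiff : ∀ (z₁ z₂ : H0), ‖(z₁ : H)‖ < r₀ → ‖(z₂ : H)‖ < r₀ → ∀ x : Xpm, ‖x‖ ≤ r₀ →
      ‖S z₁ x - S z₂ x‖ ≤ (1 / 2) * ‖(z₁ : H) - (z₂ : H)‖ := by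
    intro z₁ z₂ hz₁ hz₂ x hx
    have hu1 := hball z₁ x hz₁ hx
    have hu2 := hball z₂ x hz₂ hx
    have hdiff : (j z₁ + (x : X)) - (j z₂ + (x : X)) = j (z₁ - z₂) := by
      rw [map_sub]; abel
    have hBe : eσ (Qr (B0X ((j z₁ + (x : X)) - (j z₂ + (x : X))))) = 0 := by
      rw [hdiff, hBj, map_zero, map_zero]
    have hSeq : S z₁ x - S z₂ x =
        -(eσ (Qr (A (j z₁ + (x : X)))) - eσ (Qr (A (j z₂ + (x : X))))
          - eσ (Qr (B0X ((j z₁ + (x : X)) - (j z₂ + (x : X)))))) := by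
      rw [hBe, hS, hS]; abel
    rw [hSeq, norm_neg]
    have hnn : ‖(j z₁ + (x : X)) - (j z₂ + (x : X))‖ ≤ Cj * ‖(z₁ : H) - (z₂ : H)‖ := by
      rw [hdiff, ← hjc]
      have := jc.le_opNorm (z₁ - z₂)
      have hzz : ‖z₁ - z₂‖ = ‖(z₁ : H) - (z₂ : H)‖ := rfl
      rwa [hzz] at this
    calc ‖eσ (Qr (A (j z₁ + (x : X)))) - eσ (Qr (A (j z₂ + (x : X))))
          - eσ (Qr (B0X ((j z₁ + (x : X)) - (j z₂ + (x : X)))))‖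
        ≤ C * (|K r| * ‖(j z₁ + (x : X)) - (j z₂ + (x : X))‖) := herr r hrpos _ _ hu1 hu2
      _ ≤ C * (|K r| * (Cj * ‖(z₁ : H) - (z₂ : H)‖)) := by
          refine mul_le_mul_of_nonneg_left ?_ hC0
          exact mul_le_mul_of_nonneg_left hnn (abs_nonneg _)
      _ = (C * |K r| * Cj) * ‖(z₁ : H) - (z₂ : H)‖ := by ring
      _ ≤ (1 / 2) * ‖(z₁ : H) - (z₂ : H)‖ :=
          mul_le_mul_of_nonneg_right hCK2 (norm_nonneg _)
  have hz0 : ‖((0 : H0) : H)‖ < r₀ := by simpa using hr₀pos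
  have hS00 : S 0 0 = 0 := by
    rw [hS]
    simp [hA0]
  -- invariance of the ball
  have hmaps : ∀ (z : H0), ‖(z : H)‖ < r₀ → ∀ x : Xpm, ‖x‖ ≤ r₀ → ‖S z x‖ ≤ r₀ := by
    intro z hz x hx
    have h1 : ‖S z x - S z 0‖ ≤ (1 / 2) * ‖x - 0‖ :=
      hcontr z hz x 0 hx (by simp [hr₀pos.le])
    have h2 : ‖S z 0 - S 0 0‖ ≤ (1 / 2) * ‖(z : H) - ((0 : H0) : H)‖ :=
      hzdiff z 0 hz hz0 0 (by simp [hr₀pos.le])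
    have h6 : ‖S z x‖ ≤ ‖S z x - S z 0‖ + ‖S z 0‖ := by
      have h7 := norm_add_le (S z x - S z 0) (S z 0)
      have h8 : (S z x - S z 0) + S z 0 = S z x := by abel
      rwa [h8] at h7
    have h7 : ‖S z 0‖ = ‖S z 0 - S 0 0‖ := by rw [hS00, sub_zero]
    simp only [sub_zero] at h1
    have h5 : ‖(z : H) - ((0 : H0) : H)‖ = ‖(z : H)‖ := by simp
    rw [h5] at h2
    linarith
  -- fixed points
  have hfix : ∀ z : H0, ‖(z : H)‖ < r₀ → ∃ x : Xpm, ‖x‖ ≤ r₀ ∧ S z x = x := by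
    intro z hz
    have hsc : IsComplete (Metric.closedBall (0 : Xpm) r₀) :=
      Metric.isClosed_closedBall.isComplete
    have hsf : Set.MapsTo (S z) (Metric.closedBall (0 : Xpm) r₀)
        (Metric.closedBall (0 : Xpm) r₀) := by
      intro x hx
      rw [Metric.mem_closedBall, dist_zero_right] at hx ⊢
      exact hmaps z hz x hx
    have hcw : ContractingWith (1/2 : NNReal) (hsf.restrict (S z) _ _) := by
      constructor
      · rw [← NNReal.coe_lt_coe]; norm_num
      · apply LipschitzWith.of_dist_le_mul
        rintro ⟨x₁, hx₁⟩ ⟨x₂, hx₂⟩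
        rw [Metric.mem_closedBall, dist_zero_right] at hx₁ hx₂
        show dist (S z x₁) (S z x₂) ≤ ((1/2 : NNReal) : ℝ) * dist x₁ x₂
        rw [dist_eq_norm, dist_eq_norm]
        have hc : ((1/2 : NNReal) : ℝ) = 1/2 := by norm_num
        rw [hc]
        exact hcontr z hz x₁ x₂ hx₁ hx₂
    obtain ⟨y, hy, hfy, -, -⟩ := hcw.exists_fixedPoint' hsc hsf
      (x := 0) (by simp [hr₀pos.le]) (edist_ne_top _ _)
    rw [Metric.mem_closedBall, dist_zero_right] at hy
    exact ⟨y, hy, hfy⟩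
  -- uniqueness of fixed points
  have huniq : ∀ z : H0, ‖(z : H)‖ < r₀ → ∀ x y : Xpm, ‖x‖ ≤ r₀ → ‖y‖ ≤ r₀ →
      S z x = x → S z y = y → x = y := by
    intro z hz x y hx hy hfx hfy
    have h1 : ‖x - y‖ ≤ (1 / 2) * ‖x - y‖ := by
      have := hcontr z hz x y hx hy
      rwa [hfx, hfy] at this
    have h2 : ‖x - y‖ = 0 := by nlinarith [norm_nonneg (x - y)]
    have := norm_eq_zero.mp h2
    exact sub_eq_zero.mp this
  -- characterization of fixed points
  have hfixchar : ∀ (z : H0) (x : Xpm), S z x = x ↔ i (A (j z + (x : X))) ∈ H0 := by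
    intro z x
    rw [hS]
    constructor
    · intro hfx
      have h1 : eσ (Qr (A (j z + (x : X)))) = 0 := by
        have := sub_eq_self.mp hfx
        exact this
      have h2 : Qr (A (j z + (x : X))) = 0 := by
        have h3 := congrArg e h1
        rw [heσ, e.apply_symm_apply, map_zero] at h3
        exact h3
      have h4 : Q (A (j z + (x : X))) = 0 := by
        rw [← hQr, h2, Submodule.coe_zero]
      exact (hQzero _).mp h4
    · intro hmem
      have h4 : Q (A (j z + (x : X))) = 0 := (hQzero _).mpr hmem
      have h2 : Qr (A (j z + (x : X))) = 0 := Subtype.ext h4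
      rw [h2, map_zero, sub_zero]
  -- construct h
  have hfix' : ∀ z : H0, ∃ x : Xpm,
      (‖(z : H)‖ < r₀ → ‖x‖ ≤ r₀ ∧ S z x = x) ∧ (¬ ‖(z : H)‖ < r₀ → x = 0) := by
    intro z
    by_cases hz : ‖(z : H)‖ < r₀
    · obtain ⟨x, hx1, hx2⟩ := hfix z hz
      exact ⟨x, fun _ => ⟨hx1, hx2⟩, fun h => absurd hz h⟩
    · exact ⟨0, fun h => absurd h hz, fun _ => rfl⟩
  choose f hf1 hf2 using hfix'
  have hf0 : f 0 = 0 := by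
    have h1 := hf1 0 hz0
    have h2 : S 0 (0 : Xpm) = 0 := hS00
    exact huniq 0 hz0 (f 0) 0 h1.1 (by simp [hr₀pos.le]) h1.2 h2
  refine ⟨r₀, hr₀pos, fun z => (f z : X), ?_, ?_, ?_, ?_, ?_, ?_⟩
  · show ((f 0 : Xpm) : X) = 0
    rw [hf0]; rfl
  · intro z hz
    exact (f z).2
  · intro z hz
    rw [← hxnorm]
    exact (hf1 z hz).1
  · intro z hz
    exact (hfixchar z (f z)).mp (hf1 z hz).2
  · intro z₁ z₂ hz₁ hz₂
    have ha := hf1 z₁ hz₁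
    have hb := hf1 z₂ hz₂
    have h1 : ‖f z₁ - f z₂‖ ≤ (1 / 2) * ‖f z₁ - f z₂‖ + (1 / 2) * ‖(z₁ : H) - (z₂ : H)‖ := by
      have h2 : f z₁ - f z₂ = (S z₁ (f z₁) - S z₁ (f z₂)) + (S z₁ (f z₂) - S z₂ (f z₂)) := by
        rw [ha.2, hb.2]; abel
      calc ‖f z₁ - f z₂‖ = ‖(S z₁ (f z₁) - S z₁ (f z₂)) + (S z₁ (f z₂) - S z₂ (f z₂))‖ := by
            rw [← h2]
        _ ≤ ‖S z₁ (f z₁) - S z₁ (f z₂)‖ + ‖S z₁ (f z₂) - S z₂ (f z₂)‖ := norm_add_le _ _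
        _ ≤ (1 / 2) * ‖f z₁ - f z₂‖ + (1 / 2) * ‖(z₁ : H) - (z₂ : H)‖ := by
            refine add_le_add (hcontr z₁ hz₁ _ _ ha.1 hb.1) (hzdiff z₁ z₂ hz₁ hz₂ _ hb.1)
    have h3 : ‖f z₁ - f z₂‖ ≤ ‖(z₁ : H) - (z₂ : H)‖ := by linarith
    have h4 : ‖(f z₁ : X) - (f z₂ : X)‖ = ‖f z₁ - f z₂‖ := by
      rw [hxnorm]; norm_num
    rw [h4]
    nlinarith [norm_nonneg ((z₁ : H) - (z₂ : H))]
  · intro h' h'0 h'mem h'bd h'ker z hz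
    set x' : Xpm := ⟨h' z, h'mem z hz⟩ with hx'def
    have hfx' : S z x' = x' := (hfixchar z x').mpr (h'ker z hz)
    have hbd' : ‖x'‖ ≤ r₀ := by rw [hxnorm]; exact h'bd z hz
    have := huniq z hz x' (f z) hbd' (hf1 z hz).1 hfx' (hf1 z hz).2
    calc h' z = (x' : X) := rfl
      _ = ((f z : Xpm) : X) := by rw [this]
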